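/- Let f be a continuous real-valued function on [-1,1] whose modulus of continuity ω_f(δ) = sup { |f(x) - f(y)| : x, y ∈ [-1,1], |x - y| ≤ δ } satisfies ω_f(1/n)·log n → 0 as n → ∞ (the Dini–Lipschitz condition). For each n, let p_n be the unique polynomial of degree at most n interpolating f at the n+1 Chebyshev nodes cos((2k+1)π/(2n+2)), k = 0, …, n. Then p_n converges to f uniformly on [-1,1], i.e. sup_{x ∈ [-1,1]} |f(x) - p_n(x)| → 0 as n → ∞. -/

import Mathlib

open Real Set Polynomial Filter



/-- The set whose supremum is the modulus of continuity. -/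
def omSet (f : ℝ → ℝ) (δ : ℝ) : Set ℝ :=
  {d : ℝ | ∃ x ∈ Set.Icc (-1 : ℝ) 1, ∃ y ∈ Set.Icc (-1 : ℝ) 1, |x - y| ≤ δ ∧ d = |f x - f y|}

lemma omSet_bddAbove {f : ℝ → ℝ} (hf : ContinuousOn f (Set.Icc (-1 : ℝ) 1)) (δ : ℝ) :
    BddAbove (omSet f δ) := by
  obtain ⟨C, hC⟩ := (isCompact_Icc (a := (-1:ℝ)) (b := 1)).exists_bound_of_continuousOn hf
  refine ⟨2 * C, ?_⟩
  rintro d ⟨x, hx, y, hy, -, rfl⟩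
  have h1 := hC x hx
  have h2 := hC y hy
  calc |f x - f y| ≤ ‖f x‖ + ‖f y‖ := by
        simpa [Real.norm_eq_abs] using abs_sub (f x) (f y)
    _ ≤ 2 * C := by linarith

lemma om_pair_le {f ω : ℝ → ℝ} (hf : ContinuousOn f (Set.Icc (-1 : ℝ) 1))
    (hω : ∀ δ : ℝ, ω δ = sSup (omSet f δ))
    {x y δ : ℝ} (hx : x ∈ Set.Icc (-1:ℝ) 1) (hy : y ∈ Set.Icc (-1:ℝ) 1)
    (hxy : |x - y| ≤ δ) : |f x - f y| ≤ ω δ := by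
  rw [hω]
  exact le_csSup (omSet_bddAbove hf δ) ⟨x, hx, y, hy, hxy, rfl⟩

lemma om_nonneg {f ω : ℝ → ℝ} (hf : ContinuousOn f (Set.Icc (-1 : ℝ) 1))
    (hω : ∀ δ : ℝ, ω δ = sSup (omSet f δ)) {δ : ℝ} (hδ : 0 ≤ δ) : 0 ≤ ω δ := by
  have h := om_pair_le hf hω (x := 0) (y := 0) (by norm_num) (by norm_num) (by simpa)
  simpa using h.trans_eq' (by simp)

/-- chaining lemma -/
lemma om_chain {f ω : ℝ → ℝ} (hf : ContinuousOn f (Set.Icc (-1 : ℝ) 1))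
    (hω : ∀ δ : ℝ, ω δ = sSup (omSet f δ))
    {x y δ : ℝ} (hδ : 0 < δ) (hx : x ∈ Set.Icc (-1:ℝ) 1) (hy : y ∈ Set.Icc (-1:ℝ) 1) :
    |f x - f y| ≤ (|x - y| / δ + 1) * ω δ := by
  set m : ℕ := max 1 ⌈|x - y| / δ⌉₊ with hm
  have hm1 : 1 ≤ m := le_max_left _ _
  have hmpos : (0:ℝ) < (m:ℝ) := by exact_mod_cast hm1
  -- chain points
  set z : ℕ → ℝ := fun i => x + (i : ℝ) / m * (y - x) with hz
  have hz0 : z 0 = x := by simp [hz]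
  have hzm : z m = y := by simp only [hz]; rw [div_self hmpos.ne']; ring
  have hzmem : ∀ i : ℕ, i ≤ m → z i ∈ Set.Icc (-1:ℝ) 1 := by
    intro i hi
    have h0 : (0:ℝ) ≤ (i:ℝ)/m := by positivity
    have h1 : (i:ℝ)/m ≤ 1 := by
      rw [div_le_one hmpos]; exact_mod_cast hi
    obtain ⟨hx1, hx2⟩ := hx; obtain ⟨hy1, hy2⟩ := hy
    have hzi : z i = x + (i:ℝ)/m*(y-x) := rfl
    set c : ℝ := (i:ℝ)/m
    have h1' : (0:ℝ) ≤ 1 - c := by linarith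
    constructor <;> rw [hzi] <;>
      nlinarith [mul_le_mul_of_nonneg_left hy1 h0, mul_le_mul_of_nonneg_left hy2 h0,
        mul_le_mul_of_nonneg_left hx1 h1', mul_le_mul_of_nonneg_left hx2 h1']
  have hstep : ∀ i : ℕ, i < m → |f (z (i+1)) - f (z i)| ≤ ω δ := by
    intro i hi
    apply om_pair_le hf hω (hzmem _ hi) (hzmem _ hi.le)
    have : z (i+1) - z i = (y - x) / m := by
      simp only [hz]; push_cast; field_simp; ring
    rw [this, abs_div, abs_of_pos hmpos, div_le_iff₀ hmpos]
    have hceil : |x - y| / δ ≤ (m : ℝ) := by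
      calc |x - y| / δ ≤ (⌈|x - y| / δ⌉₊ : ℝ) := Nat.le_ceil _
        _ ≤ (m : ℝ) := by exact_mod_cast le_max_right _ _
    rw [div_le_iff₀ hδ] at hceil
    calc |y - x| = |x - y| := abs_sub_comm _ _
      _ ≤ δ * m := by linarith
  have htel : f y - f x = ∑ i ∈ Finset.range m, (f (z (i+1)) - f (z i)) := by
    rw [Finset.sum_range_sub (fun i => f (z i)), hz0, hzm]
  have habs : |f x - f y| ≤ (m : ℝ) * ω δ := by
    rw [abs_sub_comm, htel]
    calc |∑ i ∈ Finset.range m, (f (z (i+1)) - f (z i))|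
        ≤ ∑ i ∈ Finset.range m, |f (z (i+1)) - f (z i)| := Finset.abs_sum_le_sum_abs _ _
      _ ≤ ∑ _i ∈ Finset.range m, ω δ := by
          apply Finset.sum_le_sum; intro i hi
          exact hstep i (Finset.mem_range.1 hi)
      _ = (m : ℝ) * ω δ := by simp [mul_comm]
  refine habs.trans ?_
  have hωpos := om_nonneg hf hω hδ.le
  apply mul_le_mul_of_nonneg_right _ hωpos
  -- m ≤ |x-y|/δ + 1
  have h1 : (⌈|x - y| / δ⌉₊ : ℝ) ≤ |x - y| / δ + 1 := by
    have := Nat.ceil_lt_add_one (a := |x - y| / δ) (by positivity)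
    linarith
  have h2 : ((1:ℕ) : ℝ) ≤ |x - y| / δ + 1 := by
    have : (0:ℝ) ≤ |x - y|/δ := by positivity
    simpa using by linarith
  rcases max_cases 1 ⌈|x - y| / δ⌉₊ with ⟨h, -⟩ | ⟨h, -⟩ <;> rw [hm, h]
  · exact h2
  · exact h1

noncomputable def bApprox (f : ℝ → ℝ) (n : ℕ) : ℝ[X] :=
  ∑ k : Fin (n+1), Polynomial.C (f (2 * ((k : ℕ) : ℝ) / n - 1)) *
    ((bernsteinPolynomial ℝ n k).comp (Polynomial.C (1/2) * (Polynomial.X + Polynomial.C 1)))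

lemma bApprox_natDegree (f : ℝ → ℝ) (n : ℕ) : (bApprox f n).natDegree ≤ n := by
  refine (Polynomial.natDegree_sum_le _ _).trans ?_
  rw [Finset.fold_max_le]
  refine ⟨Nat.zero_le _, fun k _ => ?_⟩
  refine (Polynomial.natDegree_mul_le).trans ?_
  simp only [Polynomial.natDegree_C, zero_add]
  refine (Polynomial.natDegree_comp_le).trans ?_
  have h1 : (Polynomial.C (1/2 : ℝ) * (Polynomial.X + Polynomial.C 1)).natDegree ≤ 1 := by
    refine Polynomial.natDegree_mul_le.trans ?_
    simp only [Polynomial.natDegree_C, zero_add]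
    refine (Polynomial.natDegree_add_le _ _).trans ?_
    simp
  have h2 : (bernsteinPolynomial ℝ n k).natDegree ≤ n := by
    rw [bernsteinPolynomial]
    have hk : (k:ℕ) ≤ n := Fin.is_le k
    have hA : ((n.choose (k:ℕ) : ℝ[X]) * Polynomial.X ^ (k:ℕ)).natDegree ≤ (k:ℕ) := by
      refine Polynomial.natDegree_mul_le.trans ?_
      simp [Polynomial.natDegree_natCast]
    have hB : ((1 - Polynomial.X : ℝ[X]) ^ (n - (k:ℕ))).natDegree ≤ n - (k:ℕ) := by
      refine (Polynomial.natDegree_pow_le).trans ?_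
      have h1X : (1 - Polynomial.X : ℝ[X]).natDegree ≤ 1 := by
        refine (Polynomial.natDegree_sub_le _ _).trans ?_; simp
      calc (n - (k:ℕ)) * (1 - Polynomial.X : ℝ[X]).natDegree ≤ (n - (k:ℕ)) * 1 :=
            Nat.mul_le_mul_left _ h1X
        _ = n - (k:ℕ) := by ring
    refine (Polynomial.natDegree_mul_le).trans ?_
    omega
  calc (bernsteinPolynomial ℝ n k).natDegree *
        (Polynomial.C (1/2 : ℝ) * (Polynomial.X + Polynomial.C 1)).natDegree
      ≤ n * 1 := Nat.mul_le_mul h2 h1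
    _ = n := by ring

lemma bApprox_err {f ω : ℝ → ℝ} (hf : ContinuousOn f (Set.Icc (-1 : ℝ) 1))
    (hω : ∀ δ : ℝ, ω δ = sSup (omSet f δ))
    {n : ℕ} (hn : 1 ≤ n) {δ : ℝ} (hδ : 0 < δ) (hδn : 1 ≤ δ * Real.sqrt n)
    {x : ℝ} (hx : x ∈ Set.Icc (-1:ℝ) 1) :
    |f x - (bApprox f n).eval x| ≤ 2 * ω δ := by
  obtain ⟨hx1, hx2⟩ := hx
  have hnR : (0:ℝ) < n := by exact_mod_cast hn
  set t : ℝ := (x + 1) / 2 with htdef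
  have ht : t ∈ unitInterval := by constructor <;> [linarith [hx1]; (rw [htdef]; linarith)]
  have hxt : x = 2 * t - 1 := by rw [htdef]; ring
  set T : unitInterval := ⟨t, ht⟩ with hT
  set b : Fin (n+1) → ℝ := fun k => bernstein n k T with hb
  have hb0 : ∀ k, 0 ≤ b k := fun k => bernstein_nonneg
  have hb1 : ∑ k : Fin (n+1), b k = 1 := bernstein.probability n T
  have hvar : ∑ k : Fin (n+1), (t - (k:ℕ)/n : ℝ)^2 * b k = t * (1-t) / n :=
    bernstein.variance (n := n) (by omega) T
  set u : Fin (n+1) → ℝ := fun k => 2 * ((k:ℕ):ℝ)/n - 1 with hu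
  have hu_mem : ∀ k, u k ∈ Set.Icc (-1:ℝ) 1 := by
    intro k
    have hk : ((k:ℕ):ℝ) ≤ n := by exact_mod_cast Fin.is_le k
    have hk0 : (0:ℝ) ≤ ((k:ℕ):ℝ) := by positivity
    constructor
    · rw [hu]; have : (0:ℝ) ≤ 2*((k:ℕ):ℝ)/n := by positivity
      linarith
    · rw [hu]
      have : 2*((k:ℕ):ℝ)/n ≤ 2 := by
        rw [div_le_iff₀ hnR]; nlinarith
      linarith
  have heval : (bApprox f n).eval x = ∑ k : Fin (n+1), f (u k) * b k := by
    rw [bApprox, Polynomial.eval_finset_sum]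
    refine Finset.sum_congr rfl fun k _ => ?_
    rw [Polynomial.eval_mul, Polynomial.eval_C, Polynomial.eval_comp]
    congr 1
    simp only [hb, bernstein, Polynomial.toContinuousMapOn_apply,
      Polynomial.toContinuousMap_apply]
    congr 1
    simp [htdef]
    ring
  -- the distance sum
  set S1 : ℝ := ∑ k : Fin (n+1), |t - (k:ℕ)/n| * b k with hS1
  have hS1nonneg : 0 ≤ S1 := Finset.sum_nonneg fun k _ => mul_nonneg (abs_nonneg _) (hb0 k)
  have hCS : S1^2 ≤ t * (1-t) / n := by
    have := Finset.sum_mul_sq_le_sq_mul_sq Finset.univ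
      (fun k : Fin (n+1) => Real.sqrt (b k)) (fun k => Real.sqrt (b k) * |t - (k:ℕ)/n|)
    have e1 : ∀ k : Fin (n+1), Real.sqrt (b k) * (Real.sqrt (b k) * |t - (k:ℕ)/n|)
        = |t - (k:ℕ)/n| * b k := by
      intro k
      rw [← mul_assoc, Real.mul_self_sqrt (hb0 k)]; ring
    have e2 : ∀ k : Fin (n+1), Real.sqrt (b k) ^ 2 = b k := fun k => Real.sq_sqrt (hb0 k)
    have e3 : ∀ k : Fin (n+1), (Real.sqrt (b k) * |t - (k:ℕ)/n|)^2
        = (t - (k:ℕ)/n)^2 * b k := by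
      intro k
      rw [mul_pow, e2, sq_abs]; ring
    simp only [e1] at this
    calc S1^2 ≤ (∑ k : Fin (n+1), Real.sqrt (b k) ^ 2) *
          ∑ k : Fin (n+1), (Real.sqrt (b k) * |t - (k:ℕ)/n|)^2 := this
      _ = t * (1-t)/n := by
          simp only [e2, e3, hb1, hvar, one_mul]
  have hS1le : S1 ≤ 1 / (2 * Real.sqrt n) := by
    have h4 : t * (1-t) / n ≤ 1 / (4 * n) := by
      rw [div_le_div_iff₀ hnR (by positivity)]
      nlinarith [mul_nonneg (sq_nonneg (1 - 2*t)) hnR.le]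
    have : S1 ≤ Real.sqrt (1 / (4*n)) := by
      have := Real.sqrt_le_sqrt (hCS.trans h4)
      rwa [Real.sqrt_sq hS1nonneg] at this
    refine this.trans_eq ?_
    have h5 : (1/(2*Real.sqrt n))^2 = 1/(4*(n:ℝ)) := by
      rw [div_pow, mul_pow, Real.sq_sqrt hnR.le]; norm_num
    rw [← h5, Real.sqrt_sq (by positivity)]
  -- final estimate
  have hωpos := om_nonneg hf hω hδ.le
  have habs2 : ∀ k : Fin (n+1), |x - u k| = 2 * |t - (k:ℕ)/n| := by
    intro k
    have : x - u k = 2 * (t - (k:ℕ)/n) := by rw [hxt, hu]; ring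
    rw [this, abs_mul, abs_of_nonneg (by norm_num : (0:ℝ) ≤ 2)]
  have key : |f x - (bApprox f n).eval x| ≤ ω δ * (1 + (2/δ) * S1) := by
    rw [heval]
    have hsplit : f x - ∑ k : Fin (n+1), f (u k) * b k
        = ∑ k : Fin (n+1), (f x - f (u k)) * b k := by
      have h7 : ∑ k : Fin (n+1), (f x - f (u k)) * b k
          = (∑ k : Fin (n+1), f x * b k) - ∑ k : Fin (n+1), f (u k) * b k := by
        rw [← Finset.sum_sub_distrib]
        exact Finset.sum_congr rfl fun k _ => by ring
      rw [h7, ← Finset.mul_sum, hb1, mul_one]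
    rw [hsplit]
    calc |∑ k : Fin (n+1), (f x - f (u k)) * b k|
        ≤ ∑ k : Fin (n+1), |f x - f (u k)| * b k := by
          refine (Finset.abs_sum_le_sum_abs _ _).trans ?_
          refine Finset.sum_le_sum fun k _ => ?_
          rw [abs_mul, abs_of_nonneg (hb0 k)]
      _ ≤ ∑ k : Fin (n+1), ((|x - u k|/δ + 1) * ω δ) * b k := by
          refine Finset.sum_le_sum fun k _ => ?_
          exact mul_le_mul_of_nonneg_right
            (om_chain hf hω hδ ⟨hx1, hx2⟩ (hu_mem k)) (hb0 k)
      _ = ω δ * ((1/δ) * ∑ k : Fin (n+1), |x - u k| * b k + ∑ k : Fin (n+1), b k) := by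
          rw [mul_add, ← mul_assoc, Finset.mul_sum, Finset.mul_sum, ← Finset.sum_add_distrib]
          refine Finset.sum_congr rfl fun k _ => by ring
      _ = ω δ * (1 + (2/δ) * S1) := by
          have h8 : (1/δ) * ∑ k : Fin (n+1), |x - u k| * b k = (2/δ) * S1 := by
            rw [hS1, Finset.mul_sum, Finset.mul_sum]
            refine Finset.sum_congr rfl fun k _ => ?_
            rw [habs2 k]; ring
          rw [hb1, h8]; ring
  refine key.trans ?_
  have hfinal : (2/δ) * S1 ≤ 1 := by
    have h6 : (2/δ) * S1 ≤ (2/δ) * (1/(2*Real.sqrt n)) := by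
      apply mul_le_mul_of_nonneg_left hS1le (by positivity)
    refine h6.trans ?_
    have hs : (0:ℝ) < Real.sqrt n := Real.sqrt_pos.2 hnR
    rw [div_mul_div_comm]
    rw [div_le_one (by positivity)]
    calc (2:ℝ) * 1 = 2 := by ring
      _ ≤ 2 * (δ * Real.sqrt n) := by nlinarith
      _ = δ * (2 * Real.sqrt n) := by ring
  nlinarith


lemma cheb_deg_coeff : ∀ n : ℕ, (Polynomial.Chebyshev.T ℝ ((n:ℤ)+1)).natDegree = n+1 ∧
    (Polynomial.Chebyshev.T ℝ ((n:ℤ)+1)).coeff (n+1) = 2^n := by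
  intro n
  induction n using Nat.twoStepInduction with
  | zero =>
    constructor <;> simp [Polynomial.Chebyshev.T_one]
  | one =>
    have h2 : Polynomial.Chebyshev.T ℝ (((1:ℕ):ℤ)+1) = 2 * Polynomial.X^2 - 1 := by
      have := Polynomial.Chebyshev.T_two ℝ
      convert this using 2; norm_num
    rw [h2]
    constructor
    · compute_degree!
    · have hC2 : (2 : ℝ[X]) = Polynomial.C (2:ℝ) := (map_ofNat Polynomial.C 2).symm
      rw [Polynomial.coeff_sub, hC2, Polynomial.coeff_C_mul, Polynomial.coeff_X_pow]
      norm_num [Polynomial.coeff_one]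
  | more m ih1 ih2 =>
    obtain ⟨hd1, hc1⟩ := ih1
    obtain ⟨hd2, hc2⟩ := ih2
    have hrec : Polynomial.Chebyshev.T ℝ (((m+2:ℕ):ℤ)+1)
        = 2 * Polynomial.X * Polynomial.Chebyshev.T ℝ (((m+1:ℕ):ℤ)+1)
          - Polynomial.Chebyshev.T ℝ ((m:ℤ)+1) := by
      have := Polynomial.Chebyshev.T_add_two ℝ ((m:ℤ)+1)
      convert this using 2 <;> push_cast <;> ring
    have hne : Polynomial.Chebyshev.T ℝ (((m+1:ℕ):ℤ)+1) ≠ 0 := by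
      intro h
      have h0 : (Polynomial.Chebyshev.T ℝ (((m+1:ℕ):ℤ)+1)).coeff (m+1+1) = 0 := by
        rw [h]; simp
      rw [hc2] at h0
      exact (by positivity : (0:ℝ) < 2^(m+1)).ne' h0
    have hXne : (2 * Polynomial.X : ℝ[X]) ≠ 0 := by
      intro h
      have := congrArg (fun p : ℝ[X] => p.coeff 1) h
      simp at this
    have hdX : (2 * Polynomial.X : ℝ[X]).natDegree = 1 := by compute_degree!
    have hdA : (2 * Polynomial.X * Polynomial.Chebyshev.T ℝ (((m+1:ℕ):ℤ)+1)).natDegree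
        = m + 3 := by
      rw [Polynomial.natDegree_mul hXne hne, hdX, hd2]
      ring
    have hcA : (2 * Polynomial.X * Polynomial.Chebyshev.T ℝ (((m+1:ℕ):ℤ)+1)).coeff (m+3)
        = 2^(m+2) := by
      have hC2 : (2 : ℝ[X]) = Polynomial.C (2:ℝ) := (map_ofNat Polynomial.C 2).symm
      have e : 2 * Polynomial.X * Polynomial.Chebyshev.T ℝ (((m+1:ℕ):ℤ)+1)
          = Polynomial.C (2:ℝ) * (Polynomial.X * Polynomial.Chebyshev.T ℝ (((m+1:ℕ):ℤ)+1)) := by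
        rw [← hC2]; ring
      rw [e, Polynomial.coeff_C_mul,
        show m+3 = (m+2)+1 from rfl, Polynomial.coeff_X_mul, hc2]
      ring
    have hlt : (Polynomial.Chebyshev.T ℝ ((m:ℤ)+1)).natDegree < m + 3 := by omega
    constructor
    · rw [hrec, Polynomial.natDegree_sub_eq_left_of_natDegree_lt (by rw [hdA]; omega), hdA]
    · rw [hrec, Polynomial.coeff_sub,
        show m+2+1 = m+3 from rfl, hcA,
        Polynomial.coeff_eq_zero_of_natDegree_lt hlt, sub_zero]

noncomputable def thetaC (n k : ℕ) : ℝ := (2 * (k:ℝ) + 1) * π / (2 * (n:ℝ) + 2)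

noncomputable def nodeC (n : ℕ) (k : Fin (n+1)) : ℝ := Real.cos (thetaC n k)

lemma thetaC_mem {n k : ℕ} (hk : k ≤ n) : thetaC n k ∈ Set.Ioo 0 π := by
  have hπ := Real.pi_pos
  have hd : (0:ℝ) < 2*(n:ℝ)+2 := by positivity
  constructor
  · apply div_pos _ hd
    positivity
  · rw [thetaC, div_lt_iff₀ hd]
    have : (2*(k:ℝ)+1) < 2*(n:ℝ)+2 := by
      have : (k:ℝ) ≤ n := by exact_mod_cast hk
      linarith
    nlinarith
lemma thetaC_inj {n : ℕ} {k l : ℕ} (h : thetaC n k = thetaC n l) : k = l := by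
  have hπ := Real.pi_pos
  have hd : (0:ℝ) < 2*(n:ℝ)+2 := by positivity
  rw [thetaC, thetaC, div_eq_div_iff hd.ne' hd.ne'] at h
  have : (k:ℝ) = l := by
    have h2 := mul_right_cancel₀ (ne_of_gt hd) h
    have := mul_right_cancel₀ (ne_of_gt hπ) h2
    linarith [this]
  exact_mod_cast this

lemma nodeC_injOn (n : ℕ) : Set.InjOn (nodeC n) (Finset.univ : Finset (Fin (n+1))) := by
  intro k _ l _ h
  have hk := thetaC_mem (Fin.is_le k)
  have hl := thetaC_mem (Fin.is_le l)
  have := Real.injOn_cos ⟨hk.1.le, hk.2.le⟩ ⟨hl.1.le, hl.2.le⟩ h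
  exact Fin.ext (thetaC_inj this)

lemma cos_succ_thetaC (n k : ℕ) : Real.cos (((n:ℝ)+1) * thetaC n k) = 0 := by
  have hd : (2*(n:ℝ)+2) ≠ 0 := by positivity
  have h1 : ((n:ℝ)+1) * thetaC n k = (k:ℝ)*π + π/2 := by
    rw [thetaC]; field_simp
  rw [h1, Real.cos_add, Real.cos_pi_div_two, Real.sin_pi_div_two]
  simp [Real.sin_nat_mul_pi]

lemma sin_succ_thetaC (n k : ℕ) : Real.sin (((n:ℝ)+1) * thetaC n k) = (-1)^k := by
  have h1 : ((n:ℝ)+1) * thetaC n k = (k:ℝ)*π + π/2 := by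
    rw [thetaC]; field_simp
  rw [h1, Real.sin_add, Real.cos_pi_div_two, Real.sin_pi_div_two]
  simp [Real.sin_nat_mul_pi]
  simpa using Real.cos_nat_mul_pi_sub 0 k

/-- T_{n+1} = 2^n * nodal. -/
lemma T_eq_nodal (n : ℕ) : Polynomial.Chebyshev.T ℝ ((n:ℤ)+1)
    = Polynomial.C ((2:ℝ)^n) * Lagrange.nodal Finset.univ (nodeC n) := by
  have hcard : (Finset.univ : Finset (Fin (n+1))).card = n+1 := by simp
  obtain ⟨hdT, hcT⟩ := cheb_deg_coeff n
  set Q : ℝ[X] := Polynomial.C ((2:ℝ)^n) * Lagrange.nodal Finset.univ (nodeC n) with hQ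
  have hdQle : Q.natDegree ≤ n+1 := by
    rw [hQ]
    refine Polynomial.natDegree_mul_le.trans ?_
    simp [Lagrange.natDegree_nodal, hcard]
  have hcQ : Q.coeff (n+1) = 2^n := by
    rw [hQ, Polynomial.coeff_C_mul]
    have : (Lagrange.nodal Finset.univ (nodeC n)).coeff (n+1) = 1 := by
      have hm := Lagrange.nodal_monic (s := (Finset.univ : Finset (Fin (n+1)))) (v := nodeC n)
      have := hm.coeff_natDegree
      rwa [Lagrange.natDegree_nodal, hcard] at this
    rw [this, mul_one]
  have hD : Polynomial.Chebyshev.T ℝ ((n:ℤ)+1) - Q = 0 := by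
    apply Polynomial.eq_zero_of_degree_lt_of_eval_index_eq_zero
      (Finset.univ : Finset (Fin (n+1))) (nodeC_injOn n)
    · rw [hcard]
      rw [Polynomial.degree_lt_iff_coeff_zero]
      intro m hm
      rw [Polynomial.coeff_sub]
      rcases eq_or_lt_of_le hm with h | h
      · rw [← h, hcT, hcQ, sub_self]
      · rw [Polynomial.coeff_eq_zero_of_natDegree_lt (by omega),
          Polynomial.coeff_eq_zero_of_natDegree_lt (by omega), sub_self]
    · intro k _
      rw [Polynomial.eval_sub, hQ, Polynomial.eval_mul]
      rw [Lagrange.eval_nodal_at_node (Finset.mem_univ k)]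
      rw [nodeC, Polynomial.Chebyshev.T_real_cos]
      push_cast
      rw [cos_succ_thetaC]
      ring
  exact sub_eq_zero.mp hD

lemma eval_nodal_cos (n : ℕ) (φ : ℝ) :
    Polynomial.eval (Real.cos φ) (Lagrange.nodal Finset.univ (nodeC n))
      = Real.cos (((n:ℝ)+1)*φ) / 2^n := by
  have h := congrArg (Polynomial.eval (Real.cos φ)) (T_eq_nodal n)
  rw [Polynomial.Chebyshev.T_real_cos, Polynomial.eval_mul, Polynomial.eval_C] at h
  have h2 : (((n:ℤ)+1 : ℤ):ℝ) * φ = ((n:ℝ)+1)*φ := by push_cast; ring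
  rw [h2] at h
  field_simp [h]
  rw [h]; ring

lemma sin_thetaC_pos {n : ℕ} (k : Fin (n+1)) : 0 < Real.sin (thetaC n (k:ℕ)) := by
  have h := thetaC_mem (Fin.is_le k)
  exact Real.sin_pos_of_pos_of_lt_pi h.1 h.2

lemma abs_nodalWeight (n : ℕ) (k : Fin (n+1)) :
    |Lagrange.nodalWeight Finset.univ (nodeC n) k|
      = 2^n * Real.sin (thetaC n (k:ℕ)) / ((n:ℝ)+1) := by
  have hsin := sin_thetaC_pos k
  have hderivT : Polynomial.derivative (Polynomial.Chebyshev.T ℝ ((n:ℤ)+1))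
      = ((n:ℤ)+1 : ℤ) * Polynomial.Chebyshev.U ℝ ((n:ℤ)) := by
    have := Polynomial.Chebyshev.T_derivative_eq_U (R := ℝ) ((n:ℤ)+1)
    simpa using this
  have hU : Polynomial.eval (nodeC n k) (Polynomial.Chebyshev.U ℝ ((n:ℤ)))
      * Real.sin (thetaC n (k:ℕ)) = (-1)^(k:ℕ) := by
    have := Polynomial.Chebyshev.U_real_cos (thetaC n (k:ℕ)) (n:ℤ)
    rw [nodeC]
    rw [this]
    have h2 : (((n:ℤ):ℝ) + 1) * thetaC n (k:ℕ) = ((n:ℝ)+1) * thetaC n (k:ℕ) := by push_cast; ring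
    rw [h2, sin_succ_thetaC]
  have hUval : Polynomial.eval (nodeC n k) (Polynomial.Chebyshev.U ℝ ((n:ℤ)))
      = (-1)^(k:ℕ) / Real.sin (thetaC n (k:ℕ)) := by
    field_simp at hU ⊢
    linarith [hU]
  -- derivative of nodal
  have hderiv_nodal : Polynomial.eval (nodeC n k)
      (Polynomial.derivative (Lagrange.nodal Finset.univ (nodeC n)))
      = ((n:ℝ)+1) * ((-1)^(k:ℕ) / Real.sin (thetaC n (k:ℕ))) / 2^n := by
    have h := congrArg Polynomial.derivative (T_eq_nodal n)
    rw [hderivT, Polynomial.derivative_C_mul] at h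
    have h2 := congrArg (Polynomial.eval (nodeC n k)) h
    rw [Polynomial.eval_mul, Polynomial.eval_mul, Polynomial.eval_C, Polynomial.eval_intCast] at h2
    rw [hUval] at h2
    have h3 : (((n:ℤ)+1 : ℤ):ℝ) = (n:ℝ)+1 := by push_cast; ring
    rw [h3] at h2
    have hp : ((2:ℝ))^n ≠ 0 := by positivity
    field_simp at h2 ⊢
    linarith [h2]
  rw [Lagrange.nodalWeight_eq_eval_derivative_nodal (Finset.mem_univ k), hderiv_nodal]
  rw [abs_inv, abs_div, abs_mul, abs_div]
  rw [abs_of_pos hsin, abs_of_pos (by positivity : (0:ℝ) < (n:ℝ)+1),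
    abs_of_pos (by positivity : (0:ℝ) < (2:ℝ)^n)]
  rw [abs_pow, abs_neg, abs_one, one_pow]
  field_simp

lemma cos_lip (a b : ℝ) : |Real.cos a - Real.cos b| ≤ |a - b| := by
  rw [Real.cos_sub_cos, abs_mul, abs_mul]
  have h1 : |(-2:ℝ)| = 2 := by norm_num
  have h2 : |Real.sin ((a+b)/2)| ≤ 1 := Real.abs_sin_le_one _
  have h3 : |Real.sin ((a-b)/2)| ≤ |(a-b)/2| := Real.abs_sin_le_abs
  have h4 : (0:ℝ) ≤ |Real.sin ((a-b)/2)| := abs_nonneg _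
  calc |(-2:ℝ)| * |Real.sin ((a+b)/2)| * |Real.sin ((a-b)/2)|
      ≤ 2 * 1 * |(a-b)/2| := by
        rw [h1]
        have := mul_le_mul h2 h3 h4 (by norm_num : (0:ℝ) ≤ 1)
        nlinarith [abs_nonneg ((a-b)/2)]
    _ = |a-b| := by rw [abs_div, abs_of_pos (by norm_num : (0:ℝ) < 2)]; ring

lemma abs_sin_eq_sin_abs {x : ℝ} (hx : |x| ≤ π) : |Real.sin x| = Real.sin |x| := by
  rcases le_or_gt 0 x with h | h
  · rw [abs_of_nonneg h, abs_of_nonneg (Real.sin_nonneg_of_nonneg_of_le_pi h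
      (by rwa [abs_of_nonneg h] at hx))]
  · have h0 : 0 ≤ Real.sin (-x) := Real.sin_nonneg_of_nonneg_of_le_pi (by linarith)
      (by rwa [abs_of_neg h] at hx)
    rw [Real.sin_neg] at h0
    rw [abs_of_neg h, abs_of_nonpos (by linarith), ← Real.sin_neg]

lemma sin_le_sin_of_mem {x y : ℝ} (hx0 : 0 ≤ x) (hxy : x ≤ y) (hy : y ≤ π - x) :
    Real.sin x ≤ Real.sin y := by
  have hπ := Real.pi_pos
  rcases le_or_gt y (π/2) with h | h
  · exact (Real.strictMonoOn_sin.monotoneOn ⟨by linarith, by linarith⟩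
      ⟨by linarith, h⟩ hxy)
  · rw [← Real.sin_pi_sub y]
    exact (Real.strictMonoOn_sin.monotoneOn ⟨by linarith, by linarith⟩
      ⟨by linarith, by linarith⟩ (by linarith))

/-- `sin b ≤ 2 sin ((a+b)/2)` for `a, b ∈ [0, π]`. -/
lemma sin_le_two_sin_half {a b : ℝ} (ha : a ∈ Set.Icc 0 π) (hb : b ∈ Set.Icc 0 π) :
    Real.sin b ≤ 2 * Real.sin ((a+b)/2) := by
  obtain ⟨ha1, ha2⟩ := ha; obtain ⟨hb1, hb2⟩ := hb
  set s := (a+b)/2 with hs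
  set d := (b-a)/2 with hd
  have hds : |d| ≤ s := by
    rw [abs_le]; constructor <;> simp only [hd, hs] <;> linarith
  have hdpis : s + |d| ≤ π := by
    rw [abs_le] at hds
    rcases abs_cases d with ⟨he, -⟩ | ⟨he, -⟩ <;> rw [he] <;> simp only [hd, hs] <;> linarith
  have hdpi : |d| ≤ π := by
    have := abs_nonneg d
    linarith [hds, hdpis]
  have hsin_s : 0 ≤ Real.sin s := Real.sin_nonneg_of_nonneg_of_le_pi
    (le_trans (abs_nonneg d) hds) (by linarith [abs_nonneg d])
  have h1 : Real.sin b = Real.sin s * Real.cos d + Real.cos s * Real.sin d := by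
    have : b = s + d := by rw [hs, hd]; ring
    rw [this, Real.sin_add]
  have h2 : Real.sin s * Real.cos d ≤ Real.sin s := by
    nlinarith [Real.cos_le_one d]
  have h5 : Real.sin |d| ≤ Real.sin s := sin_le_sin_of_mem (abs_nonneg d) hds (by linarith)
  have h3 : Real.cos s * Real.sin d ≤ Real.sin s := by
    calc Real.cos s * Real.sin d ≤ |Real.cos s * Real.sin d| := le_abs_self _
      _ = |Real.cos s| * |Real.sin d| := abs_mul _ _
      _ ≤ 1 * |Real.sin d| := mul_le_mul_of_nonneg_right (Real.abs_cos_le_one s) (abs_nonneg _)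
      _ = Real.sin |d| := by rw [one_mul, abs_sin_eq_sin_abs hdpi]
      _ ≤ Real.sin s := h5
  linarith

/-- identity: `|cos a - cos b| = 2 sin((a+b)/2) sin(|a-b|/2)` on `[0,π]`. -/
lemma abs_cos_sub_cos_eq {a b : ℝ} (ha : a ∈ Set.Icc 0 π) (hb : b ∈ Set.Icc 0 π) :
    |Real.cos a - Real.cos b| = 2 * Real.sin ((a+b)/2) * Real.sin (|a-b|/2) := by
  obtain ⟨ha1, ha2⟩ := ha; obtain ⟨hb1, hb2⟩ := hb
  have hsin_s : 0 ≤ Real.sin ((a+b)/2) := Real.sin_nonneg_of_nonneg_of_le_pi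
    (by linarith) (by linarith)
  have hd2 : |(a-b)/2| ≤ π := by
    rw [abs_le]; constructor <;> linarith [Real.pi_pos]
  rw [Real.cos_sub_cos, abs_mul, abs_mul]
  rw [abs_sin_eq_sin_abs hd2]
  rw [abs_of_nonneg hsin_s]
  have : |(a-b)/2| = |a-b|/2 := by
    rw [abs_div]; norm_num
  rw [this]
  norm_num

/-- The pointwise dominating function for the Lagrange basis. -/
noncomputable def Lb (n : ℕ) (φ : ℝ) (k : ℕ) : ℝ :=
  if ((n:ℝ)+1) * |φ - thetaC n k| ≤ 1 then π else π / (((n:ℝ)+1) * |φ - thetaC n k|)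

lemma basis_bound (n : ℕ) (k : Fin (n+1)) {φ : ℝ} (hφ : φ ∈ Set.Icc 0 π) :
    |Polynomial.eval (Real.cos φ) (Lagrange.basis Finset.univ (nodeC n) k)| ≤ Lb n φ (k:ℕ) := by
  have hπ := Real.pi_pos
  have hπ1 : (1:ℝ) < π := by linarith [Real.pi_gt_three]
  obtain ⟨hφ1, hφ2⟩ := hφ
  have hθ := thetaC_mem (Fin.is_le k)
  set θ := thetaC n (k:ℕ) with hθdef
  have hθmem : θ ∈ Set.Icc 0 π := ⟨hθ.1.le, hθ.2.le⟩
  by_cases hc : Real.cos φ = nodeC n k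
  · have hφθ : φ = θ := by
      apply Real.injOn_cos ⟨hφ1, hφ2⟩ ⟨hθ.1.le, hθ.2.le⟩
      exact hc
    rw [hc, Lagrange.eval_basis_self (nodeC_injOn n) (Finset.mem_univ k)]
    rw [Lb, if_pos (by rw [← hθdef, hφθ]; simp)]
    simpa using hπ1.le
  · have hφθ : φ ≠ θ := by
      intro h; exact hc (by rw [h, nodeC])
    set d := |φ - θ| with hddef
    have hd0 : 0 < d := by
      rw [hddef]; exact abs_pos.2 (sub_ne_zero.2 hφθ)
    have hdπ : d ≤ π := by
      rw [hddef, abs_le]; constructor <;> linarith [hθ.1, hθ.2]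
    set s := (φ+θ)/2 with hsdef
    have hsin_s : 0 < Real.sin s :=
      Real.sin_pos_of_pos_of_lt_pi (by rw [hsdef]; nlinarith [hθ.1]) (by rw [hsdef]; nlinarith [hθ.2])
    set E := |Real.cos (((n:ℝ)+1) * φ)| with hEdef
    have hE1 : E ≤ 1 := Real.abs_cos_le_one _
    have hE2 : E ≤ ((n:ℝ)+1) * d := by
      have h0 := cos_succ_thetaC n (k:ℕ)
      calc E = |Real.cos (((n:ℝ)+1)*φ) - Real.cos (((n:ℝ)+1)*θ)| := by
            rw [← hθdef] at h0; rw [hEdef, h0, sub_zero]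
        _ ≤ |((n:ℝ)+1)*φ - ((n:ℝ)+1)*θ| := cos_lip _ _
        _ = ((n:ℝ)+1) * d := by
            have he : ((n:ℝ)+1)*φ - ((n:ℝ)+1)*θ = ((n:ℝ)+1)*(φ-θ) := by ring
            rw [hddef, he, abs_mul, abs_of_pos (by positivity : (0:ℝ) < (n:ℝ)+1)]
    have hsinθ : Real.sin θ ≤ 2 * Real.sin s := sin_le_two_sin_half ⟨hφ1, hφ2⟩ hθmem
    have hsinθ0 : 0 < Real.sin θ := Real.sin_pos_of_pos_of_lt_pi hθ.1 hθ.2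
    have hdiff : |Real.cos φ - Real.cos θ| = 2 * Real.sin s * Real.sin (d/2) := by
      have := abs_cos_sub_cos_eq ⟨hφ1, hφ2⟩ hθmem
      rw [this]
    have hhalf0 : 0 < Real.sin (d/2) :=
      Real.sin_pos_of_pos_of_lt_pi (by linarith) (by linarith)
    have hhalfge : d/π ≤ Real.sin (d/2) := by
      have := Real.mul_le_sin (x := d/2) (by linarith) (by linarith)
      calc d/π = 2/π * (d/2) := by field_simp
        _ ≤ Real.sin (d/2) := this
    -- compute |basis eval|
    have habs : |Polynomial.eval (Real.cos φ) (Lagrange.basis Finset.univ (nodeC n) k)|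
        = E * Real.sin θ / (((n:ℝ)+1) * (2 * Real.sin s * Real.sin (d/2))) := by
      rw [Lagrange.eval_basis_not_at_node (Finset.mem_univ k) hc]
      rw [abs_mul, abs_mul, eval_nodal_cos, abs_div, abs_nodalWeight, abs_inv]
      have hvk : Real.cos φ - nodeC n k = Real.cos φ - Real.cos θ := by rw [nodeC]
      rw [hvk, hdiff]
      rw [abs_of_pos (by positivity : (0:ℝ) < (2:ℝ)^n)]
      rw [← hEdef, ← hθdef]
      have h2n : ((2:ℝ)^n) ≠ 0 := by positivity
      field_simp
    rw [habs]
    rw [Lb, ← hθdef, ← hddef]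
    have hD : (0:ℝ) < ((n:ℝ)+1) * (2 * Real.sin s * Real.sin (d/2)) := by positivity
    have hdsin : d ≤ π * Real.sin (d/2) := by
      rw [div_le_iff₀ hπ] at hhalfge
      linarith [hhalfge]
    by_cases hif : ((n:ℝ)+1) * d ≤ 1
    · rw [if_pos hif]
      have hkey : E * Real.sin θ ≤ (((n:ℝ)+1)*d) * (2*Real.sin s) :=
        mul_le_mul hE2 hsinθ hsinθ0.le (by positivity)
      calc E * Real.sin θ / (((n:ℝ)+1) * (2 * Real.sin s * Real.sin (d/2)))
          ≤ (((n:ℝ)+1)*d) * (2*Real.sin s) / (((n:ℝ)+1) * (2 * Real.sin s * Real.sin (d/2))) :=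
            div_le_div_of_nonneg_right ?_ ?_ |>.trans_eq rfl
        _ = d / Real.sin (d/2) := by
            field_simp
        _ ≤ π := by
            rw [div_le_iff₀ hhalf0]
            linarith [hdsin]
      · exact hkey
      · exact hD.le
    · rw [if_neg hif]
      push_neg at hif
      have hkey : E * Real.sin θ ≤ 1 * (2*Real.sin s) :=
        mul_le_mul hE1 hsinθ hsinθ0.le (by norm_num)
      calc E * Real.sin θ / (((n:ℝ)+1) * (2 * Real.sin s * Real.sin (d/2)))
          ≤ 1 * (2*Real.sin s) / (((n:ℝ)+1) * (2 * Real.sin s * Real.sin (d/2))) :=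
            div_le_div_of_nonneg_right ?_ ?_ |>.trans_eq rfl
        _ = 1 / (((n:ℝ)+1) * Real.sin (d/2)) := by
            field_simp
        _ ≤ π / (((n:ℝ)+1) * d) := by
            rw [div_le_div_iff₀ (by positivity) (by positivity)]
            have : ((n:ℝ)+1) * d ≤ ((n:ℝ)+1) * (π * Real.sin (d/2)) := by
              apply mul_le_mul_of_nonneg_left hdsin (by positivity)
            nlinarith [this]
      · exact hkey
      · exact hD.le

lemma natDist_cast_real (a b : ℕ) : (Nat.dist a b : ℝ) = |(a:ℝ) - b| := by
  rcases le_total a b with h | h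
  · have hR : (a:ℝ) ≤ b := by exact_mod_cast h
    rw [Nat.dist_eq_sub_of_le h, Nat.cast_sub h, abs_sub_comm, abs_of_nonneg (by linarith)]
  · have hR : (b:ℝ) ≤ a := by exact_mod_cast h
    rw [Nat.dist_comm, Nat.dist_eq_sub_of_le h, Nat.cast_sub h, abs_of_nonneg (by linarith)]

noncomputable def Fh : ℕ → ℝ := fun m => if m ≤ 1 then 1 else 2/m

lemma Fh_nonneg (m : ℕ) : 0 ≤ Fh m := by
  rw [Fh]; split <;> positivity

lemma Fh_le_two_div (i : ℕ) : Fh (i+1) ≤ 2/(i+1) := by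
  rw [Fh]
  split
  · have : i = 0 := by omega
    subst this; norm_num
  · norm_num

lemma leb_sum (n : ℕ) {φ : ℝ} (hφ : φ ∈ Set.Icc 0 π) :
    ∑ k : Fin (n+1), Lb n φ (k:ℕ) ≤ 6*π + 4*π*Real.log n := by
  have hπ := Real.pi_pos
  have hπ3 := Real.pi_gt_three
  obtain ⟨hφ1, hφ2⟩ := hφ
  set c : ℝ := ((n:ℝ)+1)*φ/π - 1/2 with hc
  have hck : ∀ k : ℕ, ((n:ℝ)+1) * |φ - thetaC n k| = π * |c - k| := by
    intro k
    have he : ((n:ℝ)+1) * (φ - thetaC n k) = π * (c - k) := by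
      rw [thetaC, hc]
      field_simp
      ring
    calc ((n:ℝ)+1) * |φ - thetaC n k| = |((n:ℝ)+1) * (φ - thetaC n k)| := by
          rw [abs_mul, abs_of_pos (by positivity : (0:ℝ) < (n:ℝ)+1)]
      _ = |π * (c - k)| := by rw [he]
      _ = π * |c - k| := by rw [abs_mul, abs_of_pos hπ]
  have hc1 : -(1/2 : ℝ) ≤ c := by
    rw [hc]
    have : 0 ≤ ((n:ℝ)+1)*φ/π := by positivity
    linarith
  have hc2 : c ≤ (n:ℝ) + 1/2 := by
    rw [hc, sub_le_iff_le_add, div_le_iff₀ hπ]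
    have : ((n:ℝ)+1)*φ ≤ ((n:ℝ)+1)*π := by
      apply mul_le_mul_of_nonneg_left hφ2 (by positivity)
    nlinarith
  set k₀ : ℕ := min n ⌊c + 1/2⌋₊ with hk₀def
  have hk₀n : k₀ ≤ n := min_le_left _ _
  have hk₀ : |c - (k₀:ℝ)| ≤ 1/2 := by
    have h0 : (0:ℝ) ≤ c + 1/2 := by linarith
    have hj1 : (⌊c + 1/2⌋₊ : ℝ) ≤ c + 1/2 := Nat.floor_le h0
    have hj2 : c + 1/2 < ⌊c + 1/2⌋₊ + 1 := Nat.lt_floor_add_one _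
    rcases le_or_gt ⌊c + 1/2⌋₊ n with h | h
    · have : k₀ = ⌊c + 1/2⌋₊ := min_eq_right h
      rw [this, abs_le]
      constructor <;> linarith
    · have hk : k₀ = n := min_eq_left (by omega)
      have hjR : ((n:ℝ)) + 1 ≤ ⌊c + 1/2⌋₊ := by exact_mod_cast h
      rw [hk, abs_le]
      constructor <;> linarith
  -- pointwise bound
  have step1 : ∀ k : Fin (n+1), Lb n φ (k:ℕ) ≤ π * Fh (Nat.dist (k:ℕ) k₀) := by
    intro k
    have hdist : (Nat.dist (k:ℕ) k₀ : ℝ) ≤ |c - (k:ℕ)| + 1/2 := by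
      rw [natDist_cast_real]
      calc |((k:ℕ):ℝ) - k₀| = |(((k:ℕ):ℝ) - c) + (c - k₀)| := by ring_nf
        _ ≤ |((k:ℕ):ℝ) - c| + |c - (k₀:ℝ)| := abs_add_le _ _
        _ ≤ |c - ((k:ℕ):ℝ)| + 1/2 := by rw [abs_sub_comm]; linarith
    rw [Lb, hck (k:ℕ)]
    by_cases hif : π * |c - ((k:ℕ):ℝ)| ≤ 1
    · rw [if_pos hif]
      have h2 : |c - ((k:ℕ):ℝ)| ≤ 1/2 := by
        nlinarith [abs_nonneg (c - ((k:ℕ):ℝ))]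
      have h3 : (Nat.dist (k:ℕ) k₀ : ℝ) ≤ 1 := by linarith
      have h4 : Nat.dist (k:ℕ) k₀ ≤ 1 := by exact_mod_cast h3
      rw [Fh, if_pos h4, mul_one]
    · rw [if_neg hif]
      push_neg at hif
      have habs0 : 1/π < |c - ((k:ℕ):ℝ)| := by
        rw [div_lt_iff₀ hπ]; linarith [hif]
      have habs0' : (0:ℝ) < |c - ((k:ℕ):ℝ)| := lt_trans (by positivity) habs0
      have heq : π / (π * |c - ((k:ℕ):ℝ)|) = 1 / |c - ((k:ℕ):ℝ)| := by
        field_simp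
      rw [heq]
      rcases le_or_gt (Nat.dist (k:ℕ) k₀) 1 with h | h
      · rw [Fh, if_pos h, mul_one, div_le_iff₀ habs0']
        nlinarith [habs0]
      · rw [Fh, if_neg (by omega)]
        have hd2 : (2:ℝ) ≤ (Nat.dist (k:ℕ) k₀ : ℝ) := by exact_mod_cast h
        have hge : (Nat.dist (k:ℕ) k₀ : ℝ) - 1/2 ≤ |c - ((k:ℕ):ℝ)| := by linarith
        have hpos : (0:ℝ) < (Nat.dist (k:ℕ) k₀ : ℝ) - 1/2 := by linarith
        calc 1 / |c - ((k:ℕ):ℝ)| ≤ 1 / ((Nat.dist (k:ℕ) k₀ : ℝ) - 1/2) := by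
              apply one_div_le_one_div_of_le hpos hge
          _ ≤ 2 / (Nat.dist (k:ℕ) k₀ : ℝ) := by
              rw [div_le_div_iff₀ hpos (by linarith)]
              linarith
          _ ≤ π * (2 / (Nat.dist (k:ℕ) k₀ : ℝ)) := by
              nlinarith [div_nonneg (by norm_num : (0:ℝ) ≤ 2) (by linarith : (0:ℝ) ≤ (Nat.dist (k:ℕ) k₀ : ℝ))]
  -- counting
  have step2 : ∑ k : Fin (n+1), Fh (Nat.dist (k:ℕ) k₀)
      ≤ 2 * ∑ m ∈ Finset.range (n+1), Fh m := by
    classical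
    have hsplit := Finset.sum_filter_add_sum_filter_not Finset.univ
      (fun k : Fin (n+1) => (k:ℕ) ≤ k₀) (fun k => Fh (Nat.dist (k:ℕ) k₀))
    have hS1 : ∑ k ∈ Finset.univ.filter (fun k : Fin (n+1) => (k:ℕ) ≤ k₀),
        Fh (Nat.dist (k:ℕ) k₀) ≤ ∑ m ∈ Finset.range (n+1), Fh m := by
      have hinj : ∀ a ∈ Finset.univ.filter (fun k : Fin (n+1) => (k:ℕ) ≤ k₀),
          ∀ b ∈ Finset.univ.filter (fun k : Fin (n+1) => (k:ℕ) ≤ k₀),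
          Nat.dist (a:ℕ) k₀ = Nat.dist (b:ℕ) k₀ → a = b := by
        intro a ha b hb hab
        simp only [Finset.mem_filter] at ha hb
        have h1 := Nat.dist_eq_sub_of_le ha.2
        have h2 := Nat.dist_eq_sub_of_le hb.2
        have : (a:ℕ) = (b:ℕ) := by omega
        exact Fin.ext this
      have himg : ∑ m ∈ (Finset.univ.filter (fun k : Fin (n+1) => (k:ℕ) ≤ k₀)).image
            (fun k : Fin (n+1) => Nat.dist (k:ℕ) k₀), Fh m
          = ∑ k ∈ Finset.univ.filter (fun k : Fin (n+1) => (k:ℕ) ≤ k₀),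
            Fh (Nat.dist (k:ℕ) k₀) := Finset.sum_image hinj
      rw [← himg]
      apply Finset.sum_le_sum_of_subset_of_nonneg
      · intro m hm
        simp only [Finset.mem_image, Finset.mem_filter] at hm
        obtain ⟨k, ⟨-, hk⟩, rfl⟩ := hm
        rw [Finset.mem_range]
        have := Nat.dist_eq_sub_of_le hk
        omega
      · intro m _ _; exact Fh_nonneg m
    have hS2 : ∑ k ∈ Finset.univ.filter (fun k : Fin (n+1) => ¬((k:ℕ) ≤ k₀)),
        Fh (Nat.dist (k:ℕ) k₀) ≤ ∑ m ∈ Finset.range (n+1), Fh m := by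
      have hinj : ∀ a ∈ Finset.univ.filter (fun k : Fin (n+1) => ¬((k:ℕ) ≤ k₀)),
          ∀ b ∈ Finset.univ.filter (fun k : Fin (n+1) => ¬((k:ℕ) ≤ k₀)),
          Nat.dist (a:ℕ) k₀ = Nat.dist (b:ℕ) k₀ → a = b := by
        intro a ha b hb hab
        simp only [Finset.mem_filter] at ha hb
        have ha2 := ha.2; have hb2 := hb.2
        push_neg at ha2 hb2
        have h1 : Nat.dist (a:ℕ) k₀ = (a:ℕ) - k₀ := by
          rw [Nat.dist_comm]; exact Nat.dist_eq_sub_of_le (le_of_lt ha2)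
        have h2 : Nat.dist (b:ℕ) k₀ = (b:ℕ) - k₀ := by
          rw [Nat.dist_comm]; exact Nat.dist_eq_sub_of_le (le_of_lt hb2)
        have : (a:ℕ) = (b:ℕ) := by omega
        exact Fin.ext this
      have himg : ∑ m ∈ (Finset.univ.filter (fun k : Fin (n+1) => ¬((k:ℕ) ≤ k₀))).image
            (fun k : Fin (n+1) => Nat.dist (k:ℕ) k₀), Fh m
          = ∑ k ∈ Finset.univ.filter (fun k : Fin (n+1) => ¬((k:ℕ) ≤ k₀)),
            Fh (Nat.dist (k:ℕ) k₀) := Finset.sum_image hinj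
      rw [← himg]
      apply Finset.sum_le_sum_of_subset_of_nonneg
      · intro m hm
        simp only [Finset.mem_image, Finset.mem_filter] at hm
        obtain ⟨k, ⟨-, hk⟩, rfl⟩ := hm
        rw [Finset.mem_range]
        push_neg at hk
        have h3 : Nat.dist (k:ℕ) k₀ = (k:ℕ) - k₀ := by
          rw [Nat.dist_comm]; exact Nat.dist_eq_sub_of_le (le_of_lt hk)
        have hkn : (k:ℕ) ≤ n := Fin.is_le k
        omega
      · intro m _ _; exact Fh_nonneg m
    calc ∑ k : Fin (n+1), Fh (Nat.dist (k:ℕ) k₀)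
        = _ + _ := hsplit.symm
      _ ≤ _ + _ := add_le_add hS1 hS2
      _ = 2 * ∑ m ∈ Finset.range (n+1), Fh m := by ring
  have step3 : ∑ m ∈ Finset.range (n+1), Fh m ≤ 3 + 2*Real.log n := by
    rw [Finset.sum_range_succ']
    have h0 : Fh 0 = 1 := by rw [Fh]; norm_num
    have h1 : ∑ i ∈ Finset.range n, Fh (i+1) ≤ 2 * (harmonic n : ℝ) := by
      rw [harmonic]
      push_cast
      rw [Finset.mul_sum]
      apply Finset.sum_le_sum
      intro i _
      have := Fh_le_two_div i
      rw [div_eq_mul_inv] at this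
      calc Fh (i+1) ≤ 2 * ((i:ℝ)+1)⁻¹ := by push_cast at this ⊢; linarith [this]
        _ = 2 * (((i:ℕ):ℝ)+1)⁻¹ := by norm_num
    have h2 : (harmonic n : ℝ) ≤ 1 + Real.log n := harmonic_le_one_add_log n
    rw [h0]
    linarith
  calc ∑ k : Fin (n+1), Lb n φ (k:ℕ)
      ≤ ∑ k : Fin (n+1), π * Fh (Nat.dist (k:ℕ) k₀) := Finset.sum_le_sum fun k _ => step1 k
    _ = π * ∑ k : Fin (n+1), Fh (Nat.dist (k:ℕ) k₀) := by rw [Finset.mul_sum]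
    _ ≤ π * (2 * ∑ m ∈ Finset.range (n+1), Fh m) := by
        apply mul_le_mul_of_nonneg_left step2 hπ.le
    _ ≤ π * (2 * (3 + 2*Real.log n)) := by
        apply mul_le_mul_of_nonneg_left _ hπ.le
        linarith [step3]
    _ = 6*π + 4*π*Real.log n := by ring

lemma nodeC_mem (n : ℕ) (k : Fin (n+1)) : nodeC n k ∈ Set.Icc (-1:ℝ) 1 :=
  ⟨Real.neg_one_le_cos _, Real.cos_le_one _⟩

/-- The full pointwise interpolation error bound. -/
lemma err_bound {f ω : ℝ → ℝ} (hf : ContinuousOn f (Set.Icc (-1 : ℝ) 1))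
    (hω : ∀ δ : ℝ, ω δ = sSup (omSet f δ))
    {n : ℕ} (hn : 1 ≤ n) {δ : ℝ} (hδ : 0 < δ) (hδn : 1 ≤ δ * Real.sqrt n)
    {x : ℝ} (hx : x ∈ Set.Icc (-1:ℝ) 1) :
    |f x - (Lagrange.interpolate Finset.univ (nodeC n)
        (fun k => f (nodeC n k))).eval x|
      ≤ 2 * ω δ * (1 + (6*π + 4*π*Real.log n)) := by
  have hπ := Real.pi_pos
  have hcard : (Finset.univ : Finset (Fin (n+1))).card = n+1 := by simp
  set φ : ℝ := Real.arccos x with hφdef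
  have hφmem : φ ∈ Set.Icc 0 π := ⟨Real.arccos_nonneg x, Real.arccos_le_pi x⟩
  have hcosφ : Real.cos φ = x := Real.cos_arccos hx.1 hx.2
  set q : ℝ[X] := bApprox f n with hq
  have hdeg : q.degree < ((Finset.univ : Finset (Fin (n+1))).card : ℕ) := by
    rw [hcard]
    refine lt_of_le_of_lt Polynomial.degree_le_natDegree ?_
    exact_mod_cast Nat.lt_succ_of_le (bApprox_natDegree f n)
  have hqe := Lagrange.eq_interpolate (f := q) (nodeC_injOn n) hdeg
  set P : ℝ[X] := Lagrange.interpolate Finset.univ (nodeC n) (fun k => f (nodeC n k)) with hP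
  have hPq : P - q = Lagrange.interpolate Finset.univ (nodeC n)
      (fun k => f (nodeC n k) - q.eval (nodeC n k)) := by
    rw [hP]
    conv_lhs => rw [hqe]
    rw [← map_sub]
    rfl
  have hωnn : 0 ≤ ω δ := om_nonneg hf hω hδ.le
  have hnode_err : ∀ k : Fin (n+1), |f (nodeC n k) - q.eval (nodeC n k)| ≤ 2 * ω δ :=
    fun k => bApprox_err hf hω hn hδ hδn (nodeC_mem n k)
  have hPq_eval : |(P - q).eval x| ≤ 2 * ω δ * (6*π + 4*π*Real.log n) := by
    rw [hPq, Lagrange.interpolate_apply, Polynomial.eval_finset_sum]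
    calc |∑ k : Fin (n+1), ((Polynomial.C (f (nodeC n k) - q.eval (nodeC n k))
            * Lagrange.basis Finset.univ (nodeC n) k).eval x)|
        ≤ ∑ k : Fin (n+1), |f (nodeC n k) - q.eval (nodeC n k)|
            * |(Lagrange.basis Finset.univ (nodeC n) k).eval x| := by
          refine (Finset.abs_sum_le_sum_abs _ _).trans ?_
          refine Finset.sum_le_sum fun k _ => ?_
          rw [Polynomial.eval_mul, Polynomial.eval_C, abs_mul]
      _ ≤ ∑ k : Fin (n+1), (2 * ω δ) * Lb n φ (k:ℕ) := by
          refine Finset.sum_le_sum fun k _ => ?_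
          have hb := basis_bound n k hφmem
          rw [hcosφ] at hb
          exact mul_le_mul (hnode_err k) hb (abs_nonneg _) (by positivity)
      _ = (2 * ω δ) * ∑ k : Fin (n+1), Lb n φ (k:ℕ) := by rw [Finset.mul_sum]
      _ ≤ (2 * ω δ) * (6*π + 4*π*Real.log n) := by
          apply mul_le_mul_of_nonneg_left (leb_sum n hφmem) (by positivity)
  have hfq : |f x - q.eval x| ≤ 2 * ω δ := bApprox_err hf hω hn hδ hδn hx
  calc |f x - P.eval x| = |(f x - q.eval x) - (P - q).eval x| := by
        rw [Polynomial.eval_sub]; ring_nf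
    _ ≤ |f x - q.eval x| + |(P - q).eval x| := abs_sub _ _
    _ ≤ 2 * ω δ + 2 * ω δ * (6*π + 4*π*Real.log n) := add_le_add hfq hPq_eval
    _ = 2 * ω δ * (1 + (6*π + 4*π*Real.log n)) := by ring

/-- Dini–Lipschitz: if the modulus of continuity of `f` on `[-1,1]` satisfies
`ω_f(1/n) · log n → 0`, then interpolation at the Chebyshev nodes converges
uniformly to `f` on `[-1,1]`. -/
theorem chebyshev_interpolation_dini_lipschitz
    (f : ℝ → ℝ) (hf : ContinuousOn f (Set.Icc (-1 : ℝ) 1))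
    (ω : ℝ → ℝ)
    (hω : ∀ δ : ℝ, ω δ = sSup {d : ℝ | ∃ x ∈ Set.Icc (-1 : ℝ) 1,
      ∃ y ∈ Set.Icc (-1 : ℝ) 1, |x - y| ≤ δ ∧ d = |f x - f y|})
    (hDL : Tendsto (fun n : ℕ => ω (1 / n) * Real.log n) atTop (nhds 0))
    (p : ℕ → ℝ[X])
    (hp : ∀ n : ℕ, p n = Lagrange.interpolate Finset.univ
      (fun k : Fin (n + 1) => Real.cos ((2 * (k : ℕ) + 1) * π / (2 * n + 2)))
      (fun k : Fin (n + 1) =>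
        f (Real.cos ((2 * (k : ℕ) + 1) * π / (2 * n + 2))))) :
    Tendsto (fun n : ℕ =>
        sSup ((fun x => |f x - (p n).eval x|) '' Set.Icc (-1 : ℝ) 1))
      atTop (nhds 0) := by
  have hω' : ∀ δ : ℝ, ω δ = sSup (omSet f δ) := hω
  have hπ := Real.pi_pos
  have hp' : ∀ n : ℕ, p n = Lagrange.interpolate Finset.univ (nodeC n)
      (fun k => f (nodeC n k)) := hp
  set S : ℕ → ℝ := fun n => sSup ((fun x => |f x - (p n).eval x|) '' Set.Icc (-1 : ℝ) 1)
    with hS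
  -- nonnegativity
  have hS0 : ∀ n, 0 ≤ S n := by
    intro n
    have hcont : ContinuousOn (fun x => |f x - (p n).eval x|) (Set.Icc (-1:ℝ) 1) :=
      (hf.sub (p n).continuousOn).abs
    have hbdd : BddAbove ((fun x => |f x - (p n).eval x|) '' Set.Icc (-1:ℝ) 1) :=
      (isCompact_Icc.image_of_continuousOn hcont).bddAbove
    have hm : |f 0 - (p n).eval 0| ∈ (fun x => |f x - (p n).eval x|) '' Set.Icc (-1:ℝ) 1 :=
      ⟨0, by norm_num, rfl⟩
    exact le_trans (abs_nonneg _) (le_csSup hbdd hm)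
  -- the dominating sequence
  set C₁ : ℝ := 2*(1 + 6*π + 4*π*Real.log 4) with hC₁
  set C₂ : ℝ := 16*π with hC₂
  set H : ℕ → ℝ := fun m => C₁ * ω (1/(m:ℝ)) + C₂ * (ω (1/(m:ℝ)) * Real.log m) with hH
  have hSle : ∀ n : ℕ, 1 ≤ n → S n ≤ H (Nat.sqrt n) := by
    intro n hn
    set m : ℕ := Nat.sqrt n with hm
    have hm1 : 1 ≤ m := by
      rw [hm]; exact Nat.sqrt_pos.2 hn
    have hmR : (1:ℝ) ≤ (m:ℝ) := by exact_mod_cast hm1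
    have hnR : (0:ℝ) < (n:ℝ) := by exact_mod_cast hn
    set δ : ℝ := 1/(m:ℝ) with hδdef
    have hδ : 0 < δ := by positivity
    have hmsqrt : (m:ℝ) ≤ Real.sqrt n := by
      rw [show ((m:ℝ)) = ((m:ℝ)) from rfl]
      rw [show ((m:ℝ)) = Real.sqrt ((m:ℝ)^2) from (Real.sqrt_sq (by positivity)).symm]
      apply Real.sqrt_le_sqrt
      have : m^2 ≤ n := Nat.sqrt_le' n
      exact_mod_cast this
    have hδn : 1 ≤ δ * Real.sqrt n := by
      rw [hδdef, div_mul_eq_mul_div, one_mul, le_div_iff₀ (by positivity)]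
      linarith
    have hωnn : 0 ≤ ω δ := om_nonneg hf hω' hδ.le
    -- log comparison
    have hlog : Real.log n ≤ Real.log 4 + 2 * Real.log m := by
      have hn4 : (n:ℝ) ≤ 4 * (m:ℝ)^2 := by
        have h1 : n < (m+1)^2 := Nat.lt_succ_sqrt' n
        have h2 : (m+1)^2 ≤ 4*m^2 := by nlinarith [hm1]
        have : n ≤ 4*m^2 := by omega
        exact_mod_cast this
      calc Real.log n ≤ Real.log (4 * (m:ℝ)^2) := Real.log_le_log hnR hn4
        _ = Real.log 4 + 2 * Real.log m := by
            rw [Real.log_mul (by norm_num) (by positivity), Real.log_pow]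
            push_cast
            ring
    -- pointwise bound and sup
    have hptw : ∀ x ∈ Set.Icc (-1:ℝ) 1, |f x - (p n).eval x| ≤ H m := by
      intro x hx
      rw [hp' n]
      refine (err_bound hf hω' hn hδ hδn hx).trans ?_
      have : 1 + (6*π + 4*π*Real.log n) ≤ 1 + 6*π + 4*π*Real.log 4 + 8*π*Real.log m := by
        nlinarith [hlog, hπ]
      calc 2 * ω δ * (1 + (6*π + 4*π*Real.log n))
          ≤ 2 * ω δ * (1 + 6*π + 4*π*Real.log 4 + 8*π*Real.log m) := by
            apply mul_le_mul_of_nonneg_left this (by positivity)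
        _ = H m := by rw [hH, hC₁, hC₂, hδdef]; ring
    rw [hS]
    apply csSup_le
    · exact ⟨|f 0 - (p n).eval 0|, 0, by norm_num, rfl⟩
    · rintro y ⟨x, hx, rfl⟩
      exact hptw x hx
  -- limits
  have hψ : Tendsto (fun m : ℕ => ω (1/(m:ℝ)) * Real.log m) atTop (nhds 0) := hDL
  have hχ : Tendsto (fun m : ℕ => ω (1/(m:ℝ))) atTop (nhds 0) := by
    apply squeeze_zero' (t₀ := atTop)
    · filter_upwards [eventually_ge_atTop 1] with m hm
      have : (0:ℝ) < (m:ℝ) := by exact_mod_cast hm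
      exact om_nonneg hf hω' (by positivity)
    · filter_upwards [eventually_ge_atTop 2] with m hm
      have h2R : (2:ℝ) ≤ (m:ℝ) := by exact_mod_cast hm
      have hlog2 : Real.log 2 ≤ Real.log m := Real.log_le_log (by norm_num) h2R
      have hlog2pos : (0:ℝ) < Real.log 2 := Real.log_pos (by norm_num)
      have hωnn : 0 ≤ ω (1/(m:ℝ)) := om_nonneg hf hω' (by positivity)
      show ω (1/(m:ℝ)) ≤ (fun m : ℕ => ω (1/(m:ℝ)) * Real.log m / Real.log 2) m
      rw [le_div_iff₀ hlog2pos]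
      nlinarith [mul_le_mul_of_nonneg_left hlog2 hωnn]
    · have := hψ.div_const (Real.log 2)
      simpa using this
  have hsqrt_tendsto : Tendsto (fun n : ℕ => Nat.sqrt n) atTop atTop := by
    apply tendsto_atTop_atTop.2
    intro b
    exact ⟨b*b, fun n hn => Nat.le_sqrt.2 hn⟩
  have hHlim : Tendsto H atTop (nhds 0) := by
    rw [hH]
    have h1 := hχ.const_mul C₁
    have h2 := hψ.const_mul C₂
    have := h1.add h2
    simpa using this
  have hHcomp : Tendsto (fun n : ℕ => H (Nat.sqrt n)) atTop (nhds 0) :=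
    hHlim.comp hsqrt_tendsto
  apply squeeze_zero' (t₀ := atTop)
  · exact Eventually.of_forall hS0
  · filter_upwards [eventually_ge_atTop 1] with n hn
    exact hSle n hn
  · exact hHcomp
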